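/- Let d ≥ 2, a > 0, let γ : ℝ → ℝ^d be a smooth unit-speed curve (‖γ'(s)‖ = 1 for all s), let U ⊂ ℝ^d be open, and let s : U → ℝ be a continuously differentiable function such that for every x ∈ U one has ‖x − γ(s(x))‖ = a and (x − γ(s(x))) · γ'(s(x)) ≠ 0. Then the vector field V : U → ℝ^d defined by V(x) := (x − γ(s(x)))/a satisfies ‖V(x)‖ = 1 and div V(x) = (d−1)/a for every x ∈ U. -/

import Mathlib

open MeasureTheory Metric Set

/-- The divergence of a vector field on `ℝ^d`, i.e. the trace of its Fréchet derivative. -/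
noncomputable def divergence {d : ℕ} (V : EuclideanSpace ℝ (Fin d) → EuclideanSpace ℝ (Fin d))
    (x : EuclideanSpace ℝ (Fin d)) : ℝ :=
  LinearMap.trace ℝ _ (fderiv ℝ V x).toLinearMap

/-- A set `S ⊆ ℝ^d` has smooth boundary if near every boundary point it is the sublevel set
of a smooth function with nonvanishing gradient. -/
def HasSmoothBoundary {d : ℕ} (S : Set (EuclideanSpace ℝ (Fin d))) : Prop :=
  ∀ x ∈ frontier S, ∃ U : Set (EuclideanSpace ℝ (Fin d)), IsOpen U ∧ x ∈ U ∧
    ∃ f : EuclideanSpace ℝ (Fin d) → ℝ, ContDiff ℝ (⊤ : ℕ∞) f ∧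
      (∀ y ∈ U, fderiv ℝ f y ≠ 0) ∧ S ∩ U = {y | y ∈ U ∧ f y < 0}

/-- The Cheeger constant of `Ω ⊆ ℝ^d`: the infimum of `H^{d-1}(∂S) / λ(S)` over nonempty
bounded open subsets `S ⊆ Ω` with smooth boundary. -/
noncomputable def cheegerConstant {d : ℕ} (Ω : Set (EuclideanSpace ℝ (Fin d))) : ℝ :=
  sInf { h : ℝ | ∃ S : Set (EuclideanSpace ℝ (Fin d)), S.Nonempty ∧ IsOpen S ∧
    Bornology.IsBounded S ∧ S ⊆ Ω ∧ HasSmoothBoundary S ∧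
    h = (μH[(d : ℝ) - 1] (frontier S)).toReal / (volume S).toReal }


lemma trace_smulRight_aux {d : ℕ} (f : EuclideanSpace ℝ (Fin d) →ₗ[ℝ] ℝ)
    (v : EuclideanSpace ℝ (Fin d)) :
    LinearMap.trace ℝ _ (f.smulRight v) = f v := by
  have h : f.smulRight v = dualTensorHom ℝ _ _ (f ⊗ₜ v) := by
    ext m; simp [dualTensorHom_apply]
  rw [h, LinearMap.trace_eq_contract_apply, contractLeft_apply]

/-- If `s : U → ℝ` is `C¹` on an open set `U ⊆ ℝ^d` with `‖x - γ(s(x))‖ = a` and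
`(x - γ(s(x))) · γ'(s(x)) ≠ 0` on `U`, where `γ` is a smooth unit-speed curve, then the
vector field `V(x) = (x - γ(s(x)))/a` satisfies `‖V‖ = 1` and `div V = (d-1)/a` on `U`. -/
theorem test_vector_field_of_tube
    (d : ℕ) (hd : 2 ≤ d) (a : ℝ) (ha : 0 < a)
    (γ : ℝ → EuclideanSpace ℝ (Fin d))
    (hsmooth : ContDiff ℝ (⊤ : ℕ∞) γ)
    (hunit : ∀ t : ℝ, ‖deriv γ t‖ = 1)
    (U : Set (EuclideanSpace ℝ (Fin d))) (hU : IsOpen U)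
    (s : EuclideanSpace ℝ (Fin d) → ℝ) (hs : ContDiffOn ℝ 1 s U)
    (hdist : ∀ x ∈ U, ‖x - γ (s x)‖ = a)
    (hperp : ∀ x ∈ U, (inner ℝ (x - γ (s x)) (deriv γ (s x)) : ℝ) ≠ 0)
    (V : EuclideanSpace ℝ (Fin d) → EuclideanSpace ℝ (Fin d))
    (hVdef : ∀ x, V x = a⁻¹ • (x - γ (s x))) :
    ∀ x ∈ U, ‖V x‖ = 1 ∧ divergence V x = ((d : ℝ) - 1) / a := by
  intro x hx
  have hV1 : ‖V x‖ = 1 := by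
    rw [hVdef, norm_smul, hdist x hx, norm_inv, Real.norm_of_nonneg ha.le,
      inv_mul_cancel₀ ha.ne']
  refine ⟨hV1, ?_⟩
  set w : EuclideanSpace ℝ (Fin d) := x - γ (s x) with hwdef
  set g : EuclideanSpace ℝ (Fin d) := deriv γ (s x) with hgdef
  set c : ℝ := inner ℝ w g with hcdef
  have hc : c ≠ 0 := hperp x hx
  have hds : DifferentiableAt ℝ s x :=
    ((hs.differentiableOn one_ne_zero).differentiableAt (hU.mem_nhds hx))
  set φ := fderiv ℝ s x with hφdef
  have hγd : HasDerivAt γ g (s x) :=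
    ((hsmooth.differentiable (by simp)) (s x)).hasDerivAt
  have hcomp : HasFDerivAt (fun y => γ (s y)) (φ.smulRight g) x := by
    have := (hγd.hasFDerivAt).comp x hds.hasFDerivAt
    exact this.congr_fderiv (ContinuousLinearMap.ext fun h => by simp [φ])
  have hF : HasFDerivAt (fun y => y - γ (s y))
      (ContinuousLinearMap.id ℝ _ - φ.smulRight g) x := (hasFDerivAt_id x).sub hcomp
  have hVd : HasFDerivAt V (a⁻¹ • (ContinuousLinearMap.id ℝ _ - φ.smulRight g)) x := by
    have hVeq : V = fun y => a⁻¹ • (y - γ (s y)) := funext hVdef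
    rw [hVeq]
    exact hF.const_smul a⁻¹
  -- the constraint: the squared distance is constant on U
  have hN : HasFDerivAt (fun y => (inner ℝ (y - γ (s y)) (y - γ (s y)) : ℝ))
      ((fderivInnerCLM ℝ (w, w)).comp
        ((ContinuousLinearMap.id ℝ _ - φ.smulRight g).prod
          (ContinuousLinearMap.id ℝ _ - φ.smulRight g))) x := hF.inner ℝ hF
  have hconst : (fun y => (inner ℝ (y - γ (s y)) (y - γ (s y)) : ℝ)) =ᶠ[nhds x]
      fun _ => a ^ 2 := by
    filter_upwards [hU.mem_nhds hx] with y hy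
    rw [real_inner_self_eq_norm_sq, hdist y hy]
  have hzero : HasFDerivAt (fun y => (inner ℝ (y - γ (s y)) (y - γ (s y)) : ℝ))
      (0 : EuclideanSpace ℝ (Fin d) →L[ℝ] ℝ) x :=
    (hasFDerivAt_const (a ^ 2) x).congr_of_eventuallyEq hconst
  have hD0 : ((fderivInnerCLM ℝ (w, w)).comp
        ((ContinuousLinearMap.id ℝ _ - φ.smulRight g).prod
          (ContinuousLinearMap.id ℝ _ - φ.smulRight g))) = 0 :=
    hN.unique hzero
  have key : ∀ h : EuclideanSpace ℝ (Fin d), (inner ℝ w h : ℝ) = φ h * c := by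
    intro h
    have := ContinuousLinearMap.ext_iff.mp hD0 h
    simp only [ContinuousLinearMap.comp_apply, ContinuousLinearMap.prod_apply,
      fderivInnerCLM_apply, ContinuousLinearMap.sub_apply, ContinuousLinearMap.id_apply,
      ContinuousLinearMap.smulRight_apply, ContinuousLinearMap.zero_apply] at this
    have hsym : (inner ℝ (h - φ h • g) w : ℝ) = inner ℝ w (h - φ h • g) := real_inner_comm _ _
    rw [hsym] at this
    have h2 : (2 : ℝ) * (inner ℝ w (h - φ h • g) : ℝ) = 0 := by linarith
    have h3 : (inner ℝ w (h - φ h • g) : ℝ) = 0 := by linarith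
    rw [inner_sub_right, real_inner_smul_right] at h3
    rw [← hcdef] at h3
    linarith
  have hφg : φ g = 1 := by
    have h1 : c = φ g * c := hcdef.trans (key g)
    have h2 := mul_right_cancel₀ hc (show (1 : ℝ) * c = φ g * c by linarith)
    linarith
  -- compute the divergence
  have hfd : fderiv ℝ V x = a⁻¹ • (ContinuousLinearMap.id ℝ _ - φ.smulRight g) := hVd.fderiv
  rw [divergence, hfd]
  have hcoe : (↑(a⁻¹ • (ContinuousLinearMap.id ℝ (EuclideanSpace ℝ (Fin d)) - φ.smulRight g)) :
      EuclideanSpace ℝ (Fin d) →ₗ[ℝ] EuclideanSpace ℝ (Fin d)) =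
      a⁻¹ • (LinearMap.id - (φ : EuclideanSpace ℝ (Fin d) →ₗ[ℝ] ℝ).smulRight g) := by
    ext h
    simp
  rw [hcoe, _root_.map_smul, map_sub, LinearMap.trace_id, trace_smulRight_aux]
  have : (φ : EuclideanSpace ℝ (Fin d) →ₗ[ℝ] ℝ) g = 1 := hφg
  rw [this]
  simp [finrank_euclideanSpace_fin, div_eq_inv_mul]
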